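/- Let R be a commutative ring and let a, b : ℕ → R be sequences with a(0) = 1 and b(0) = 1. Assume that N_j · a(j) = 0 and N_j · b(j) = 0 in R for every j ≥ 1. Then for every l ≥ 1 one has N_l · (∑_{j+k=l} a(j)·b(k)) = 0 in R. -/

import Mathlib

/-- For `t ∈ ℕ`: `N 0 = 0`; `N t = 2` for odd `t`;
`N t = 2 * ∏_{p prime, (p-1) ∣ t} p^(v_p(t)+1)` for even positive `t`.
(Any prime `p` with `(p-1) ∣ t` satisfies `p ≤ t + 1 < t + 2`.) -/
def Npaper (t : ℕ) : ℕ :=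
  if t = 0 then 0
  else if t % 2 = 1 then 2
  else 2 * ∏ p ∈ Finset.filter (fun p => p.Prime ∧ (p - 1) ∣ t) (Finset.range (t + 2)),
      p ^ (t.factorization p + 1)

lemma Npaper_odd {t : ℕ} (ht : t % 2 = 1) : Npaper t = 2 := by
  have h0 : t ≠ 0 := by omega
  simp [Npaper, h0, ht]

lemma Npaper_even_def {t : ℕ} (h0 : t ≠ 0) (h2 : t % 2 = 0) :
    Npaper t = 2 * ∏ p ∈ Finset.filter (fun p => p.Prime ∧ (p - 1) ∣ t) (Finset.range (t + 2)),
      p ^ (t.factorization p + 1) := by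
  simp [Npaper, h0, h2]

lemma Npaper_ne_zero {t : ℕ} (ht : 1 ≤ t) : Npaper t ≠ 0 := by
  rcases Nat.mod_two_eq_zero_or_one t with h2 | h2
  · rw [Npaper_even_def (by omega) h2]
    refine mul_ne_zero two_ne_zero ?_
    rw [Finset.prod_ne_zero_iff]
    intro p hp
    simp only [Finset.mem_filter] at hp
    exact pow_ne_zero _ hp.2.1.ne_zero
  · rw [Npaper_odd h2]; norm_num

lemma two_dvd_Npaper {t : ℕ} (ht : 1 ≤ t) : 2 ∣ Npaper t := by
  rcases Nat.mod_two_eq_zero_or_one t with h2 | h2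
  · rw [Npaper_even_def (by omega) h2]; exact Dvd.intro _ rfl
  · rw [Npaper_odd h2]

lemma mem_Nfilter_iff {t q : ℕ} (h0 : t ≠ 0) :
    q ∈ Finset.filter (fun p => p.Prime ∧ (p - 1) ∣ t) (Finset.range (t + 2)) ↔
      q.Prime ∧ (q - 1) ∣ t := by
  simp only [Finset.mem_filter, Finset.mem_range, and_iff_right_iff_imp]
  rintro ⟨hq, hd⟩
  rcases Nat.eq_zero_or_pos (q - 1) with h | h
  · omega
  · have := Nat.le_of_dvd (Nat.pos_of_ne_zero h0) hd
    omega

lemma Npaper_fact {t q : ℕ} (h0 : t ≠ 0) (h2 : t % 2 = 0) :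
    (Npaper t).factorization q =
      (if q = 2 then 1 else 0) +
      (if q.Prime ∧ (q - 1) ∣ t then t.factorization q + 1 else 0) := by
  have hP : ∀ p ∈ Finset.filter (fun p => p.Prime ∧ (p - 1) ∣ t) (Finset.range (t + 2)),
      p ^ (t.factorization p + 1) ≠ 0 := by
    intro p hp
    simp only [Finset.mem_filter] at hp
    exact pow_ne_zero _ hp.2.1.ne_zero
  rw [Npaper_even_def h0 h2,
    Nat.factorization_mul two_ne_zero (Finset.prod_ne_zero_iff.mpr hP),
    Nat.factorization_prod hP]
  simp only [Finsupp.add_apply, Finsupp.finset_sum_apply]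
  congr 1
  · rw [Nat.Prime.factorization Nat.prime_two, Finsupp.single_apply]
    simp [eq_comm]
  · have : ∀ p ∈ Finset.filter (fun p => p.Prime ∧ (p - 1) ∣ t) (Finset.range (t + 2)),
        (p ^ (t.factorization p + 1)).factorization q =
        if p = q then t.factorization p + 1 else 0 := by
      intro p hp
      simp only [Finset.mem_filter] at hp
      rw [Nat.factorization_pow, Nat.Prime.factorization hp.2.1]
      simp only [Nat.smul_one_eq_cast, smul_eq_mul, Finsupp.smul_apply, Finsupp.single_apply]
      split_ifs <;> simp
    rw [Finset.sum_congr rfl this, Finset.sum_ite_eq']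
    by_cases hq : q ∈ Finset.filter (fun p => p.Prime ∧ (p - 1) ∣ t) (Finset.range (t + 2))
    · rw [if_pos hq, if_pos ((mem_Nfilter_iff h0).mp hq)]
    · rw [if_neg hq, if_neg (fun h => hq ((mem_Nfilter_iff h0).mpr h))]

lemma min_fact_le {p j k : ℕ} (hp : p.Prime) (hj : j ≠ 0) (hk : k ≠ 0) :
    min (j.factorization p) (k.factorization p) ≤ (j + k).factorization p := by
  rw [← Nat.Prime.pow_dvd_iff_le_factorization hp (by omega)]
  exact dvd_add
    (dvd_trans (pow_dvd_pow p (min_le_left _ _)) (Nat.ordProj_dvd j p))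
    (dvd_trans (pow_dvd_pow p (min_le_right _ _)) (Nat.ordProj_dvd k p))

lemma gcd_dvd_Npaper {j k : ℕ} (hj : 1 ≤ j) (hk : 1 ≤ k) :
    Nat.gcd (Npaper j) (Npaper k) ∣ Npaper (j + k) := by
  rcases Nat.mod_two_eq_zero_or_one j with hj2 | hj2 <;>
    rcases Nat.mod_two_eq_zero_or_one k with hk2 | hk2
  · -- both even
    have hl2 : (j + k) % 2 = 0 := by omega
    have hlne : Npaper (j + k) ≠ 0 := Npaper_ne_zero (by omega)
    have hjne := Npaper_ne_zero hj
    have hkne := Npaper_ne_zero hk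
    rw [← Nat.factorization_le_iff_dvd (Nat.gcd_ne_zero_left hjne) hlne,
      Nat.factorization_gcd hjne hkne, Finsupp.le_def]
    intro q
    rw [Finsupp.inf_apply, Npaper_fact (by omega) hj2, Npaper_fact (by omega) hk2,
      Npaper_fact (by omega) hl2]
    by_cases hq2 : q = 2
    · subst hq2
      have hd : ∀ t : ℕ, t ≠ 0 → ((2 : ℕ).Prime ∧ (2 - 1) ∣ t) := by
        intro t ht; exact ⟨Nat.prime_two, one_dvd t⟩
      simp only [if_pos rfl, if_pos (hd j (by omega)), if_pos (hd k (by omega)),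
        if_pos (hd (j + k) (by omega))]
      have := min_fact_le Nat.prime_two (p := 2) (by omega : j ≠ 0) (by omega : k ≠ 0)
      omega
    · simp only [if_neg hq2, zero_add]
      by_cases hqj : q.Prime ∧ (q - 1) ∣ j
      · by_cases hqk : q.Prime ∧ (q - 1) ∣ k
        · have hql : q.Prime ∧ (q - 1) ∣ (j + k) := ⟨hqj.1, dvd_add hqj.2 hqk.2⟩
          rw [if_pos hqj, if_pos hqk, if_pos hql]
          have := min_fact_le hqj.1 (p := q) (by omega : j ≠ 0) (by omega : k ≠ 0)
          omega
        · rw [if_neg hqk]; simp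
      · rw [if_neg hqj]; simp
  · -- j even, k odd: j + k odd
    rw [Npaper_odd (by omega : (j + k) % 2 = 1), ← Npaper_odd hk2]
    exact Nat.gcd_dvd_right _ _
  · -- j odd, k even
    rw [Npaper_odd (by omega : (j + k) % 2 = 1), ← Npaper_odd hj2]
    exact Nat.gcd_dvd_left _ _
  · -- both odd
    rw [Npaper_odd hj2, Npaper_odd hk2, Nat.gcd_self]
    exact two_dvd_Npaper (by omega)

lemma gcd_smul_mul_eq_zero {R : Type*} [CommRing R] {m n : ℕ} {x y : R}
    (hx : m • x = 0) (hy : n • y = 0) : Nat.gcd m n • (x * y) = 0 := by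
  have h : ((Nat.gcd m n : ℤ)) • (x * y) = 0 := by
    rw [Nat.gcd_eq_gcd_ab, add_smul, mul_comm (m : ℤ), mul_comm (n : ℤ),
      mul_smul, mul_smul]
    have hx2 : (m : ℤ) • (x * y) = 0 := by
      rw [natCast_zsmul, ← smul_mul_assoc, hx, zero_mul]
    have hy2 : (n : ℤ) • (x * y) = 0 := by
      rw [natCast_zsmul, ← mul_smul_comm, hy, mul_zero]
    rw [hx2, hy2, smul_zero, smul_zero, add_zero]
  rwa [natCast_zsmul] at h

/-- If `a 0 = b 0 = 1` and `N j • a j = 0`, `N j • b j = 0` for all `j ≥ 1`, then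
`N l • (∑_{j+k=l} a j * b k) = 0` for all `l ≥ 1`. -/
theorem stmt_5 {R : Type*} [CommRing R] (a b : ℕ → R)
    (ha0 : a 0 = 1) (hb0 : b 0 = 1)
    (ha : ∀ j, 1 ≤ j → Npaper j • a j = 0)
    (hb : ∀ j, 1 ≤ j → Npaper j • b j = 0) :
    ∀ l, 1 ≤ l → Npaper l • (∑ p ∈ Finset.HasAntidiagonal.antidiagonal l, a p.1 * b p.2) = 0 := by
  intro l hl
  rw [Finset.smul_sum]
  apply Finset.sum_eq_zero
  rintro ⟨j, k⟩ hjk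
  rw [Finset.HasAntidiagonal.mem_antidiagonal] at hjk
  rcases Nat.eq_zero_or_pos j with rfl | hj
  · simp only [zero_add] at hjk
    subst hjk
    rw [ha0, one_mul]
    exact hb _ hl
  rcases Nat.eq_zero_or_pos k with rfl | hk
  · have hjl : j = l := by omega
    subst hjl
    rw [hb0, mul_one]
    exact ha _ hl
  · obtain ⟨c, hc⟩ := gcd_dvd_Npaper hj hk
    rw [← hjk, hc, mul_comm, mul_smul, gcd_smul_mul_eq_zero (ha j hj) (hb k hk), smul_zero]
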